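/- Let r > 0 and let u : B(0,2r) → ℝ be continuous, where B(0,2r) ⊆ ℝ². Assume u enjoys comparison with cones centered at interior points: for every x and s > 0 with the closed ball of center x and radius s contained in B(0,2r) and every c ≥ 0, (i) if u(y) ≤ u(x) + c|y − x| for all y with |y − x| = s, then u(y) ≤ u(x) + c|y − x| for all y with |y − x| ≤ s; and (ii) if u(y) ≥ u(x) − c|y − x| for all y with |y − x| = s, then u(y) ≥ u(x) − c|y − x| for all y with |y − x| ≤ s. Let b ∈ ℝ, a ∈ ℝ², and λ ≥ 0 be such that |u(x) − b − a·x| ≤ λ for all x ∈ B(0,2r). Then for every x ∈ B(0,r) and every y with |y − x| < r: |u(y) − u(x)| ≤ (|a| + 2λ/r) |y − x|. -/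

import Mathlib

open Real MeasureTheory
open scoped RealInnerProductSpace

noncomputable section

/-- The Euclidean plane ℝ². -/
abbrev E2 : Type := EuclideanSpace ℝ (Fin 2)

/-- Standard basis vector. -/
def ee (i : Fin 2) : E2 := EuclideanSpace.single i (1 : ℝ)

/-- Partial derivative ∂ᵢf. -/
def pd (i : Fin 2) (f : E2 → ℝ) (x : E2) : ℝ := fderiv ℝ f x (ee i)

/-- Second partial derivative ∂ᵢ∂ⱼf. -/
def pd2 (i j : Fin 2) (f : E2 → ℝ) (x : E2) : ℝ := pd i (pd j f) x

/-- |Df|², squared Euclidean norm of the gradient. -/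
def gradSq (f : E2 → ℝ) (x : E2) : ℝ := (pd 0 f x) ^ 2 + (pd 1 f x) ^ 2

/-- |Df|, Euclidean norm of the gradient. -/
def gradNorm (f : E2 → ℝ) (x : E2) : ℝ := Real.sqrt (gradSq f x)

/-- Laplacian Δf = tr D²f. -/
def lap (f : E2 → ℝ) (x : E2) : ℝ := pd2 0 0 f x + pd2 1 1 f x

/-- ∞-Laplacian Δ∞f = D²f Df · Df. -/
def infLap (f : E2 → ℝ) (x : E2) : ℝ :=
  pd2 0 0 f x * pd 0 f x * pd 0 f x + pd2 0 1 f x * pd 0 f x * pd 1 f x +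
  pd2 1 0 f x * pd 1 f x * pd 0 f x + pd2 1 1 f x * pd 1 f x * pd 1 f x

/-- |D²f|², squared Frobenius norm of the Hessian. -/
def hessFrobSq (f : E2 → ℝ) (x : E2) : ℝ :=
  (pd2 0 0 f x) ^ 2 + (pd2 0 1 f x) ^ 2 + (pd2 1 0 f x) ^ 2 + (pd2 1 1 f x) ^ 2

/-- det D²f, determinant of the Hessian. -/
def detHess (f : E2 → ℝ) (x : E2) : ℝ :=
  pd2 0 0 f x * pd2 1 1 f x - pd2 0 1 f x * pd2 1 0 f x

/-- |D²f Df|². -/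
def hessGradSq (f : E2 → ℝ) (x : E2) : ℝ :=
  (pd2 0 0 f x * pd 0 f x + pd2 0 1 f x * pd 1 f x) ^ 2 +
  (pd2 1 0 f x * pd 0 f x + pd2 1 1 f x * pd 1 f x) ^ 2

/-- Jacobian determinant of the planar map with components `F 0`, `F 1`. -/
def jdet (F : Fin 2 → E2 → ℝ) (x : E2) : ℝ :=
  pd 0 (F 0) x * pd 1 (F 1) x - pd 1 (F 0) x * pd 0 (F 1) x

/-- Squared Frobenius norm of the Jacobian of the planar map with components `F 0`, `F 1`. -/
def jFrobSq (F : Fin 2 → E2 → ℝ) (x : E2) : ℝ :=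
  (pd 0 (F 0) x) ^ 2 + (pd 1 (F 0) x) ^ 2 + (pd 0 (F 1) x) ^ 2 + (pd 1 (F 1) x) ^ 2

/-- Df · Dg. -/
def gradDot (f g : E2 → ℝ) (x : E2) : ℝ :=
  pd 0 f x * pd 0 g x + pd 1 f x * pd 1 g x

/-- D²ψ Dv · Dv. -/
def hessQuad (ψ v : E2 → ℝ) (x : E2) : ℝ :=
  pd2 0 0 ψ x * pd 0 v x * pd 0 v x + pd2 0 1 ψ x * pd 0 v x * pd 1 v x +
  pd2 1 0 ψ x * pd 1 v x * pd 0 v x + pd2 1 1 ψ x * pd 1 v x * pd 1 v x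

/-- (D²v Dv) · Dψ. -/
def hessGradDot (v ψ : E2 → ℝ) (x : E2) : ℝ :=
  (pd2 0 0 v x * pd 0 v x + pd2 0 1 v x * pd 1 v x) * pd 0 ψ x +
  (pd2 1 0 v x * pd 0 v x + pd2 1 1 v x * pd 1 v x) * pd 1 ψ x

/-- Smooth compactly supported test function on Ω. -/
def IsTestOn (ψ : E2 → ℝ) (Ω : Set E2) : Prop :=
  ContDiff ℝ (⊤ : ℕ∞) ψ ∧ HasCompactSupport ψ ∧ tsupport ψ ⊆ Ω

/-- Components of W = |Dv|⁻¹ Dv. -/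
def Wcomp (v : E2 → ℝ) (i : Fin 2) : E2 → ℝ := fun y => (gradNorm v y)⁻¹ * pd i v y

/-- Lipschitz bound from flatness via comparison with cones (Lemma 2.6). -/
theorem stmt_8 (r : ℝ) (hr : 0 < r) (u : E2 → ℝ)
    (hu : ContinuousOn u (Metric.ball (0 : E2) (2*r)))
    (hcone_above : ∀ x : E2, ∀ s : ℝ, 0 < s →
      Metric.closedBall x s ⊆ Metric.ball (0 : E2) (2*r) →
      ∀ c : ℝ, 0 ≤ c →
      (∀ y : E2, ‖y - x‖ = s → u y ≤ u x + c * ‖y - x‖) →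
      (∀ y : E2, ‖y - x‖ ≤ s → u y ≤ u x + c * ‖y - x‖))
    (hcone_below : ∀ x : E2, ∀ s : ℝ, 0 < s →
      Metric.closedBall x s ⊆ Metric.ball (0 : E2) (2*r) →
      ∀ c : ℝ, 0 ≤ c →
      (∀ y : E2, ‖y - x‖ = s → u x - c * ‖y - x‖ ≤ u y) →
      (∀ y : E2, ‖y - x‖ ≤ s → u x - c * ‖y - x‖ ≤ u y))
    (b : ℝ) (a : E2) (lam : ℝ) (hlam : 0 ≤ lam)
    (hflat : ∀ x ∈ Metric.ball (0 : E2) (2*r), |u x - b - ⟪a, x⟫| ≤ lam) :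
    ∀ x ∈ Metric.ball (0 : E2) r, ∀ y : E2, ‖y - x‖ < r →
      |u y - u x| ≤ (‖a‖ + 2 * lam / r) * ‖y - x‖ := by

  intro x hx y hy
  have hxlt : ‖x‖ < r := by simpa [dist_eq_norm] using hx
  set c : ℝ := ‖a‖ + 2 * lam / r with hc
  have hc0 : 0 ≤ c := by positivity
  have hsub : Metric.closedBall x r ⊆ Metric.ball (0 : E2) (2*r) := by
    intro z hz
    simp only [Metric.mem_closedBall, Metric.mem_ball, dist_eq_norm, sub_zero] at *
    calc ‖z‖ = ‖(z - x) + x‖ := by rw [sub_add_cancel]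
      _ ≤ ‖z - x‖ + ‖x‖ := norm_add_le _ _
      _ < r + r := by linarith
      _ = 2*r := by ring
  have key : ∀ z : E2, ‖z - x‖ = r → |u z - u x| ≤ c * r := by
    intro z hz
    have hzmem : z ∈ Metric.ball (0:E2) (2*r) := hsub (by
      simp [Metric.mem_closedBall, dist_eq_norm, hz])
    have hxmem : x ∈ Metric.ball (0:E2) (2*r) := hsub (by
      simp [Metric.mem_closedBall, hr.le])
    have h1 := hflat z hzmem
    have h2 := hflat x hxmem
    have h3 : |⟪a, z⟫ - ⟪a, x⟫| ≤ ‖a‖ * r := by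
      rw [← inner_sub_right]
      calc |⟪a, z - x⟫| ≤ ‖a‖ * ‖z - x‖ := abs_real_inner_le_norm a (z - x)
        _ = ‖a‖ * r := by rw [hz]
    have hrw : u z - u x = (u z - b - ⟪a, z⟫) - (u x - b - ⟪a, x⟫) + (⟪a, z⟫ - ⟪a, x⟫) := by
      ring
    have hcr : c * r = lam + lam + ‖a‖ * r := by
      rw [hc, add_mul, div_mul_cancel₀ _ hr.ne']
      ring
    rw [hrw, hcr]
    calc |(u z - b - ⟪a, z⟫) - (u x - b - ⟪a, x⟫) + (⟪a, z⟫ - ⟪a, x⟫)|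
        ≤ |(u z - b - ⟪a, z⟫) - (u x - b - ⟪a, x⟫)| + |⟪a, z⟫ - ⟪a, x⟫| := abs_add_le _ _
      _ ≤ (|u z - b - ⟪a, z⟫| + |u x - b - ⟪a, x⟫|) + |⟪a, z⟫ - ⟪a, x⟫| := by
          gcongr; exact abs_sub _ _
      _ ≤ (lam + lam) + ‖a‖ * r := by gcongr
      _ = lam + lam + ‖a‖ * r := by ring
  have habove := hcone_above x r hr hsub c hc0 (fun z hz => by
    have := key z hz
    have h := (abs_le.mp this).2
    rw [hz]; linarith) y hy.le
  have hbelow := hcone_below x r hr hsub c hc0 (fun z hz => by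
    have := key z hz
    have h := (abs_le.mp this).1
    rw [hz]; linarith) y hy.le
  rw [abs_le]
  constructor <;> [skip; linarith]
  · have := hbelow
    linarith
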